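/- Assume (i) consistency for a=2, (ii) mean transportability for a=2 (E[Y²|X=x,S=1]=E[Y²|X=x,S=0] whenever both events have positive probability), (iii) positivity of the external source (P(S=0|X=x)>0 whenever P(X=x,S=1)>0), (iv) conditional exchangeability over A in the external data for a=2 (E[Y²|X=x,S=0]=E[Y²|X=x,S=0,A=2] whenever P(X=x,S=0)>0), and (v) positivity of treatment 2 in the external data (P(A=2|X=x,S=0)>0 whenever P(X=x,S=0)>0). Then E[Y² | S=1] = γ_{0,2} := Σ_x E[Y | X=x, S=0, A=2] · P(X=x | S=1), summing over x with P(X=x,S=1)>0. -/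
import Mathlib


open Finset
open scoped Classical

noncomputable def pr {Ω : Type*} [Fintype Ω] (P : Ω → ℝ) (E : Ω → Prop) : ℝ :=
  ∑ ω, if E ω then P ω else 0

noncomputable def cexp {Ω : Type*} [Fintype Ω] (P : Ω → ℝ) (Y : Ω → ℝ) (E : Ω → Prop) : ℝ :=
  (∑ ω, if E ω then Y ω * P ω else 0) / pr P E

noncomputable def cpr {Ω : Type*} [Fintype Ω] (P : Ω → ℝ) (E F : Ω → Prop) : ℝ :=
  pr P (fun ω => E ω ∧ F ω) / pr P F

noncomputable def csum {Ω : Type*} [Fintype Ω] (P : Ω → ℝ) (Y : Ω → ℝ) (E : Ω → Prop) : ℝ :=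
  ∑ ω, if E ω then Y ω * P ω else 0

lemma cexp_eq {Ω : Type*} [Fintype Ω] (P : Ω → ℝ) (Y : Ω → ℝ) (E : Ω → Prop) :
    cexp P Y E = csum P Y E / pr P E := rfl

lemma pr_nonneg' {Ω : Type*} [Fintype Ω] (P : Ω → ℝ) (hP : ∀ ω, 0 ≤ P ω) (E : Ω → Prop) :
    0 ≤ pr P E :=
  Finset.sum_nonneg fun ω _ => by by_cases h : E ω <;> simp [pr, h, hP ω]

lemma pr_congr {Ω : Type*} [Fintype Ω] (P : Ω → ℝ) {E F : Ω → Prop} (h : ∀ ω, E ω ↔ F ω) :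
    pr P E = pr P F :=
  Finset.sum_congr rfl fun ω _ => if_congr (h ω) rfl rfl

lemma csum_zero_of_pr_zero {Ω : Type*} [Fintype Ω] (P : Ω → ℝ) (hP : ∀ ω, 0 ≤ P ω)
    (E : Ω → Prop) (Z : Ω → ℝ) (h : pr P E = 0) : csum P Z E = 0 := by
  classical
  have hall : ∀ ω ∈ Finset.univ, (if E ω then P ω else 0) = 0 :=
    (Finset.sum_eq_zero_iff_of_nonneg (fun ω _ => by by_cases hω : E ω <;> simp [hω, hP ω])).mp h
  refine Finset.sum_eq_zero fun ω _ => ?_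
  have hω := hall ω (Finset.mem_univ ω)
  by_cases hE : E ω
  · rw [if_pos hE] at hω
    rw [if_pos hE, hω, mul_zero]
  · rw [if_neg hE]


theorem stmt5    {Ω 𝓧 : Type*} [Fintype Ω] [Fintype 𝓧]
    (P : Ω → ℝ) (hP : ∀ ω, 0 ≤ P ω) (hPsum : ∑ ω, P ω = 1)
    (X : Ω → 𝓧) (S : Ω → ℕ) (A : Ω → ℕ) (Y : Ω → ℝ)
    (Y2 : Ω → ℝ)
    (hS1 : 0 < pr P (fun ω => S ω = 1))
    (hcons : ∀ ω, A ω = 2 → Y2 ω = Y ω)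
    (htrans : ∀ x, 0 < pr P (fun ω => X ω = x ∧ S ω = 1) → 0 < pr P (fun ω => X ω = x ∧ S ω = 0) → cexp P Y2 (fun ω => X ω = x ∧ S ω = 1) = cexp P Y2 (fun ω => X ω = x ∧ S ω = 0))
    (hextpos : ∀ x, 0 < pr P (fun ω => X ω = x ∧ S ω = 1) → 0 < cpr P (fun ω => S ω = 0) (fun ω => X ω = x))
    (hexchext : ∀ x, 0 < pr P (fun ω => X ω = x ∧ S ω = 0) → cexp P Y2 (fun ω => X ω = x ∧ S ω = 0) = cexp P Y2 (fun ω => X ω = x ∧ S ω = 0 ∧ A ω = 2))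
    (hposext : ∀ x, 0 < pr P (fun ω => X ω = x ∧ S ω = 0) → 0 < cpr P (fun ω => A ω = 2) (fun ω => X ω = x ∧ S ω = 0))
    : cexp P Y2 (fun ω => S ω = 1) =
      ∑ x ∈ univ.filter (fun x => 0 < pr P (fun ω => X ω = x ∧ S ω = 1)),
        cexp P Y (fun ω => X ω = x ∧ S ω = 0 ∧ A ω = 2) * (pr P (fun ω => X ω = x ∧ S ω = 1) / pr P (fun ω => S ω = 1)) := by
  classical
  set F := Finset.univ.filter (fun x => 0 < pr P (fun ω => X ω = x ∧ S ω = 1)) with hF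
  have key : ∀ x ∈ F, cexp P Y (fun ω => X ω = x ∧ S ω = 0 ∧ A ω = 2)
      = cexp P Y2 (fun ω => X ω = x ∧ S ω = 1) := by
    intro x hx
    have hx1 : 0 < pr P (fun ω => X ω = x ∧ S ω = 1) := (Finset.mem_filter.mp hx).2
    have hcprpos := hextpos x hx1
    have hx0 : 0 < pr P (fun ω => X ω = x ∧ S ω = 0) := by
      have hnum : 0 < pr P (fun ω => S ω = 0 ∧ X ω = x) := by
        by_contra h
        push_neg at h
        have hd := pr_nonneg' P hP (fun ω => X ω = x)
        have : cpr P (fun ω => S ω = 0) (fun ω => X ω = x) ≤ 0 :=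
          div_nonpos_of_nonpos_of_nonneg h hd
        linarith
      have heq : pr P (fun ω => S ω = 0 ∧ X ω = x) = pr P (fun ω => X ω = x ∧ S ω = 0) :=
        pr_congr P fun ω => and_comm
      linarith
    have h1 := htrans x hx1 hx0
    have h2 := hexchext x hx0
    have h3 : cexp P Y2 (fun ω => X ω = x ∧ S ω = 0 ∧ A ω = 2)
        = cexp P Y (fun ω => X ω = x ∧ S ω = 0 ∧ A ω = 2) := by
      rw [cexp_eq, cexp_eq]
      congr 1
      refine Finset.sum_congr rfl fun ω _ => ?_
      by_cases h : X ω = x ∧ S ω = 0 ∧ A ω = 2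
      · rw [if_pos h, if_pos h, hcons ω h.2.2]
      · rw [if_neg h, if_neg h]
    rw [← h3, ← h2, ← h1]
  have hnum : csum P Y2 (fun ω => S ω = 1)
      = ∑ x ∈ F, csum P Y2 (fun ω => X ω = x ∧ S ω = 1) := by
    have h1 : csum P Y2 (fun ω => S ω = 1)
        = ∑ x, csum P Y2 (fun ω => X ω = x ∧ S ω = 1) := by
      simp only [csum]
      rw [Finset.sum_comm]
      refine Finset.sum_congr rfl fun ω _ => ?_
      by_cases hs : S ω = 1 <;> simp [hs]
    rw [h1]
    symm
    refine Finset.sum_subset (Finset.filter_subset _ _) fun x _ hx => ?_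
    have hnp : ¬ 0 < pr P (fun ω => X ω = x ∧ S ω = 1) := by
      simpa [hF] using hx
    have hz : pr P (fun ω => X ω = x ∧ S ω = 1) = 0 :=
      le_antisymm (not_lt.mp hnp) (pr_nonneg' P hP _)
    exact csum_zero_of_pr_zero P hP _ Y2 hz
  have hmain : cexp P Y2 (fun ω => S ω = 1)
      = ∑ x ∈ F, cexp P Y2 (fun ω => X ω = x ∧ S ω = 1)
          * (pr P (fun ω => X ω = x ∧ S ω = 1) / pr P (fun ω => S ω = 1)) := by
    rw [cexp_eq, hnum, Finset.sum_div]
    refine Finset.sum_congr rfl fun x hx => ?_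
    have hx1 : 0 < pr P (fun ω => X ω = x ∧ S ω = 1) := (Finset.mem_filter.mp hx).2
    have hne : pr P (fun ω => X ω = x ∧ S ω = 1) ≠ 0 := hx1.ne'
    have hne2 : pr P (fun ω => S ω = 1) ≠ 0 := hS1.ne'
    rw [cexp_eq]
    field_simp
  rw [hmain]
  exact Finset.sum_congr rfl fun x hx => by rw [key x hx]
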